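/- A nonconstant convex domain of the form D = { (w,z) ∈ ℂ² : Re w + φ(z) < 0 } whose boundary contains a nontrivial one-dimensional analytic disc (i.e., a nonconstant holomorphic disc contained in ∂D) cannot be biholomorphic to the unit ball B². -/

import Mathlib

open Metric Complex Set Filter Topology MeasureTheory

namespace NoBiholAux

noncomputable def e2 (p : ℂ × ℂ) : ℝ := ‖p.1‖ ^ 2 + ‖p.2‖ ^ 2

noncomputable def dot (p q : ℂ × ℂ) : ℂ :=
  p.1 * (starRingEnd ℂ) q.1 + p.2 * (starRingEnd ℂ) q.2

lemma e2_nonneg (p : ℂ × ℂ) : 0 ≤ e2 p := by unfold e2; positivity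

lemma e2_eq (p : ℂ × ℂ) : e2 p = Complex.normSq p.1 + Complex.normSq p.2 := by
  rw [e2, Complex.sq_norm, Complex.sq_norm]

lemma dot_self (p : ℂ × ℂ) : dot p p = (e2 p : ℂ) := by
  rw [dot, e2_eq]
  push_cast
  rw [Complex.mul_conj, Complex.mul_conj]

lemma lagrange (p q : ℂ × ℂ) :
    Complex.normSq (dot p q) + Complex.normSq (p.1 * q.2 - p.2 * q.1) = e2 p * e2 q := by
  rw [e2_eq, e2_eq, dot]
  simp only [Complex.normSq_apply, Complex.mul_re, Complex.mul_im, Complex.add_re,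
    Complex.add_im, Complex.sub_re, Complex.sub_im, Complex.conj_re, Complex.conj_im]
  ring

lemma abs_dot_le (p q : ℂ × ℂ) :
    ‖dot p q‖ ≤ Real.sqrt (e2 p) * Real.sqrt (e2 q) := by
  have h := lagrange p q
  have h1 : Complex.normSq (dot p q) ≤ e2 p * e2 q := by
    nlinarith [Complex.normSq_nonneg (p.1 * q.2 - p.2 * q.1)]
  rw [Complex.norm_def, ← Real.sqrt_mul (e2_nonneg p)]
  exact Real.sqrt_le_sqrt h1

lemma e2_sub (p q : ℂ × ℂ) : e2 (p - q) = e2 p + e2 q - 2 * (dot p q).re := by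
  rw [e2_eq, e2_eq, e2_eq, dot]
  simp only [Prod.fst_sub, Prod.snd_sub, Complex.normSq_apply, Complex.mul_re, Complex.add_re,
    Complex.sub_re, Complex.sub_im, Complex.conj_re, Complex.conj_im, Complex.mul_im,
    Complex.add_im]
  ring

lemma e2_csmul (c : ℂ) (p : ℂ × ℂ) : e2 (c • p) = ‖c‖ ^ 2 * e2 p := by
  rw [e2, e2]
  simp only [Prod.smul_fst, Prod.smul_snd, smul_eq_mul, norm_mul]
  ring

lemma dot_smul_right (c : ℂ) (p q : ℂ × ℂ) :
    dot p (c • q) = (starRingEnd ℂ) c * dot p q := by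
  simp only [dot, Prod.smul_fst, Prod.smul_snd, smul_eq_mul, map_mul]
  ring

lemma norm_le_sqrt_e2 (p : ℂ × ℂ) : ‖p‖ ≤ Real.sqrt (e2 p) := by
  rw [Prod.norm_def]
  apply max_le
  · rw [Complex.norm_def]
    exact Real.sqrt_le_sqrt (by rw [e2_eq]; nlinarith [Complex.normSq_nonneg p.2])
  · rw [Complex.norm_def]
    exact Real.sqrt_le_sqrt (by rw [e2_eq]; nlinarith [Complex.normSq_nonneg p.1])

noncomputable def mob (a z : ℂ) : ℂ := (z - a) / (1 - (starRingEnd ℂ) a * z)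

lemma mob_denom_ne {a z : ℂ} (ha : ‖a‖ < 1) (hz : ‖z‖ < 1) :
    1 - (starRingEnd ℂ) a * z ≠ 0 := by
  intro h
  have h1 : (starRingEnd ℂ) a * z = 1 := by linear_combination -h
  have h2 : ‖(starRingEnd ℂ) a * z‖ = 1 := by rw [h1, norm_one]
  rw [norm_mul, Complex.norm_conj] at h2
  nlinarith [norm_nonneg a, norm_nonneg z]

lemma normSq_lt_one_of_abs {a : ℂ} (ha : ‖a‖ < 1) : Complex.normSq a < 1 := by
  rw [← Complex.sq_norm]
  nlinarith [norm_nonneg a]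

lemma mob_lt {a z : ℂ} (ha : ‖a‖ < 1) (hz : ‖z‖ < 1) :
    ‖mob a z‖ < 1 := by
  have hne := mob_denom_ne ha hz
  have hid : Complex.normSq (1 - (starRingEnd ℂ) a * z) - Complex.normSq (z - a)
      = (1 - Complex.normSq a) * (1 - Complex.normSq z) := by
    simp only [Complex.normSq_apply, Complex.sub_re, Complex.sub_im, Complex.mul_re,
      Complex.mul_im, Complex.one_re, Complex.one_im, Complex.conj_re, Complex.conj_im]
    ring
  have ha2 := normSq_lt_one_of_abs ha
  have hz2 := normSq_lt_one_of_abs hz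
  have hkey : Complex.normSq (z - a) < Complex.normSq (1 - (starRingEnd ℂ) a * z) := by
    nlinarith
  rw [mob, norm_div, div_lt_one (norm_pos_iff.mpr hne)]
  rw [Complex.norm_def, Complex.norm_def]
  exact Real.sqrt_lt_sqrt (Complex.normSq_nonneg _) hkey

lemma mob_diffOn {a : ℂ} (ha : ‖a‖ < 1) :
    DifferentiableOn ℂ (mob a) (ball 0 1) := by
  apply DifferentiableOn.div
  · exact (differentiable_id.sub_const a).differentiableOn
  · exact ((differentiable_const _).sub ((differentiable_const _).mul differentiable_id)).differentiableOn
  · intro z hz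
    rw [mem_ball_zero_iff] at hz
    exact mob_denom_ne ha hz

lemma mob_mapsTo {a : ℂ} (ha : ‖a‖ < 1) :
    MapsTo (mob a) (ball 0 1) (ball 0 1) := by
  intro z hz
  rw [mem_ball_zero_iff] at hz ⊢
  exact mob_lt ha hz

/-- Quantitative Schwarz–Pick estimate. -/
lemma key_est {g : ℂ → ℂ} (hg : DifferentiableOn ℂ g (ball 0 1))
    (hm : MapsTo g (ball 0 1) (ball 0 1)) {τ : ℂ} (hτ : τ ∈ ball (0 : ℂ) 1) :
    ‖g τ - g 0‖ ≤
      ‖τ‖ * (1 - ‖g 0‖ ^ 2) / (1 - ‖τ‖) := by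
  have h0 : (0 : ℂ) ∈ ball (0 : ℂ) 1 := mem_ball_self one_pos
  have ha : ‖g 0‖ < 1 := by
    have := hm h0; rwa [mem_ball_zero_iff] at this
  have hτabs : ‖τ‖ < 1 := by
    rwa [mem_ball_zero_iff] at hτ
  have hb : ‖g τ‖ < 1 := by
    have := hm hτ; rwa [mem_ball_zero_iff] at this
  set a := g 0 with ha_def
  set b := g τ with hb_def
  have hhd : DifferentiableOn ℂ (fun z => mob a (g z)) (ball 0 1) :=
    (mob_diffOn ha).comp hg hm
  have hhm : MapsTo (fun z => mob a (g z)) (ball 0 1) (ball 0 1) :=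
    fun z hz => mob_mapsTo ha (hm hz)
  have hh0 : (fun z => mob a (g z)) 0 = 0 := by
    simp [mob, ← ha_def]
  have hsch := Complex.norm_le_norm_of_mapsTo_ball hhd (hhm.mono_right ball_subset_closedBall) hh0 (mem_ball_zero_iff.mp hτ)
  have hden := mob_denom_ne ha hb
  have h1 : ‖b - a‖ ≤ ‖τ‖ * ‖1 - (starRingEnd ℂ) a * b‖ := by
    have h := hsch
    simp only [mob, norm_div] at h
    rw [div_le_iff₀ (norm_pos_iff.mpr hden)] at h
    linarith [h]
  have hrw : 1 - (starRingEnd ℂ) a * b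
      = ((1 - Complex.normSq a : ℝ) : ℂ) + (starRingEnd ℂ) a * (a - b) := by
    push_cast
    linear_combination -Complex.mul_conj a
  have h2 : ‖1 - (starRingEnd ℂ) a * b‖
      ≤ (1 - ‖a‖ ^ 2) + ‖a‖ * ‖b - a‖ := by
    rw [hrw]
    have e1 : ‖((1 - Complex.normSq a : ℝ) : ℂ)‖ = 1 - ‖a‖ ^ 2 := by
      rw [Complex.norm_real, Real.norm_eq_abs, Complex.sq_norm]
      exact _root_.abs_of_nonneg (by linarith [normSq_lt_one_of_abs ha])
    have e2' : ‖(starRingEnd ℂ) a * (a - b)‖ = ‖a‖ * ‖b - a‖ := by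
      rw [norm_mul, Complex.norm_conj, norm_sub_rev]
    calc ‖_‖ ≤ ‖((1 - Complex.normSq a : ℝ) : ℂ)‖
          + ‖(starRingEnd ℂ) a * (a - b)‖ := norm_add_le _ _
      _ = (1 - ‖a‖ ^ 2) + ‖a‖ * ‖b - a‖ := by rw [e1, e2']
  have hX0 : 0 ≤ ‖b - a‖ := norm_nonneg _
  have hτ0 : 0 ≤ ‖τ‖ := norm_nonneg _
  have ha0 : 0 ≤ ‖a‖ := norm_nonneg _
  rw [le_div_iff₀ (by linarith)]
  have h3 : ‖b - a‖ ≤ ‖τ‖ * (1 - ‖a‖ ^ 2)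
      + ‖τ‖ * (‖a‖ * ‖b - a‖) := by
    nlinarith [mul_le_mul_of_nonneg_left h2 hτ0]
  nlinarith [h3, mul_le_of_le_one_right (mul_nonneg hτ0 hX0) (le_of_lt ha)]

lemma mob_neg_mob {t t' : ℂ} (ht : ‖t‖ < 1) (ht' : ‖t'‖ < 1) :
    mob (-t) (mob t t') = t' := by
  have h1 : 1 - (starRingEnd ℂ) t * t' ≠ 0 := mob_denom_ne ht ht'
  have h0 : 1 - (starRingEnd ℂ) t * t ≠ 0 := mob_denom_ne ht ht
  rw [mob, mob, map_neg]
  rw [div_eq_iff, eq_comm]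
  · have h1' : 1 - t' * (starRingEnd ℂ) t ≠ 0 := by rwa [mul_comm]
    field_simp
    ring
  · -- denominator nonzero
    have : 1 - -(starRingEnd ℂ) t * ((t' - t) / (1 - (starRingEnd ℂ) t * t'))
        = ((1 - (starRingEnd ℂ) t * t) / (1 - (starRingEnd ℂ) t * t')) := by
      field_simp
      ring
    rw [this]
    exact div_ne_zero h0 h1

lemma mob_zero {t : ℂ} : mob (-t) 0 = t := by
  simp [mob]

noncomputable def cay (ω : ℂ) : ℂ := (ω - 1) / (ω + 1)

lemma cay_denom_ne {ω : ℂ} (hω : ‖ω‖ < 1) : ω + 1 ≠ 0 := by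
  intro h
  have : ω = -1 := eq_neg_of_add_eq_zero_left h
  rw [this] at hω
  simp at hω

lemma cay_re (ω : ℂ) (h : ω + 1 ≠ 0) :
    (cay ω).re = (Complex.normSq ω - 1) / Complex.normSq (ω + 1) := by
  rw [cay, Complex.div_re, ← add_div]
  congr 1
  simp only [Complex.sub_re, Complex.sub_im, Complex.add_re, Complex.add_im, Complex.one_re,
    Complex.one_im, Complex.normSq_apply]
  ring

lemma cay_re_neg {ω : ℂ} (hω : ‖ω‖ < 1) : (cay ω).re < 0 := by
  rw [cay_re ω (cay_denom_ne hω)]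
  apply div_neg_of_neg_of_pos
  · linarith [normSq_lt_one_of_abs hω]
  · exact Complex.normSq_pos.mpr (cay_denom_ne hω)

lemma cay_zero : cay 0 = -1 := by
  simp [cay]

lemma cay_diffOn : DifferentiableOn ℂ cay (ball 0 1) := by
  apply DifferentiableOn.div
  · exact (differentiable_id.sub_const 1).differentiableOn
  · exact (differentiable_id.add_const 1).differentiableOn
  · intro ω hω
    rw [mem_ball_zero_iff] at hω
    exact cay_denom_ne hω

lemma e2_continuous : Continuous e2 := by
  unfold e2
  exact ((continuous_norm.comp continuous_fst).pow 2).add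
    ((continuous_norm.comp continuous_snd).pow 2)

end NoBiholAux

open NoBiholAux

/-- A convex rigid-type domain `D = {Re w + φ(z) < 0} ⊆ ℂ²` whose boundary
contains a nonconstant analytic disc cannot be biholomorphic to the unit ball. -/
theorem no_biholo_ball_with_disc_in_boundary (φ : ℂ → ℝ)
    (D : Set (ℂ × ℂ)) (hD : D = {p : ℂ × ℂ | p.1.re + φ p.2 < 0})
    (hconv : Convex ℝ D)
    (d : ℂ → ℂ × ℂ) (hd : DifferentiableOn ℂ d (ball (0 : ℂ) 1))
    (hdnc : ¬ ∃ q : ℂ × ℂ, ∀ t ∈ ball (0 : ℂ) 1, d t = q)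
    (hdbd : d '' ball (0 : ℂ) 1 ⊆ frontier D) :
    ¬ ∃ F G : ℂ × ℂ → ℂ × ℂ,
      DifferentiableOn ℂ F D ∧
      DifferentiableOn ℂ G {p : ℂ × ℂ | ‖p.1‖ ^ 2 + ‖p.2‖ ^ 2 < 1} ∧
      Set.MapsTo F D {p : ℂ × ℂ | ‖p.1‖ ^ 2 + ‖p.2‖ ^ 2 < 1} ∧
      Set.MapsTo G {p : ℂ × ℂ | ‖p.1‖ ^ 2 + ‖p.2‖ ^ 2 < 1} D ∧
      (∀ p ∈ D, G (F p) = p) ∧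
      (∀ p ∈ {p : ℂ × ℂ | ‖p.1‖ ^ 2 + ‖p.2‖ ^ 2 < 1}, F (G p) = p) := by
  rintro ⟨F, G, hF, hG, hFm, hGm, hGF, hFG⟩
  classical
  set B : Set (ℂ × ℂ) := {p : ℂ × ℂ | ‖p.1‖ ^ 2 + ‖p.2‖ ^ 2 < 1} with hBdef
  have hBe2 : ∀ p : ℂ × ℂ, p ∈ B ↔ e2 p < 1 := fun p => Iff.rfl
  have hBopen : IsOpen B := by
    have hB : B = {p : ℂ × ℂ | e2 p < 1} := rfl
    rw [hB]
    exact isOpen_lt e2_continuous continuous_const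
  -- φ is convex, hence continuous
  have hφconv : ConvexOn ℝ Set.univ φ := by
    refine ⟨convex_univ, fun z1 _ z2 _ a b ha hb hab => ?_⟩
    refine le_of_forall_pos_le_add fun ε hε => ?_
    have h1 : (((-φ z1 - ε : ℝ) : ℂ), z1) ∈ D := by
      rw [hD]; simp only [Set.mem_setOf_eq, Complex.ofReal_re]; linarith
    have h2 : (((-φ z2 - ε : ℝ) : ℂ), z2) ∈ D := by
      rw [hD]; simp only [Set.mem_setOf_eq, Complex.ofReal_re]; linarith
    have h3 := hconv h1 h2 ha hb hab
    rw [hD] at h3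
    simp only [Set.mem_setOf_eq, Prod.smul_fst, Prod.smul_snd, Prod.fst_add, Prod.snd_add,
      Complex.add_re, Complex.smul_re, Complex.ofReal_re, smul_eq_mul] at h3 ⊢
    have hε' : a * ε + b * ε = ε := by rw [← add_mul, hab, one_mul]
    linarith
  have hφcont : Continuous φ := by
    have h := hφconv.continuousOn isOpen_univ
    rwa [continuousOn_univ] at h
  have hucont : Continuous (fun p : ℂ × ℂ => p.1.re + φ p.2) :=
    (Complex.continuous_re.comp continuous_fst).add (hφcont.comp continuous_snd)
  have hDmem : ∀ p : ℂ × ℂ, p ∈ D ↔ p.1.re + φ p.2 < 0 := by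
    intro p; rw [hD]; exact Iff.rfl
  have hDopen : IsOpen D := by
    have h : D = (fun p : ℂ × ℂ => p.1.re + φ p.2) ⁻¹' (Set.Iio 0) := Set.ext fun p => hDmem p
    rw [h]; exact isOpen_Iio.preimage hucont
  have hclos : ∀ p ∈ closure D, p.1.re + φ p.2 ≤ 0 := by
    intro p hp
    have h : closure D ⊆ {q : ℂ × ℂ | q.1.re + φ q.2 ≤ 0} :=
      closure_minimal (fun q hq => le_of_lt ((hDmem q).1 hq))
        (isClosed_le hucont continuous_const)
    exact h hp
  have hud : ∀ t ∈ ball (0 : ℂ) 1, (d t).1.re + φ (d t).2 = 0 := by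
    intro t ht
    have hfr : d t ∈ frontier D := hdbd ⟨t, ht, rfl⟩
    have h1 : (d t).1.re + φ (d t).2 ≤ 0 := hclos _ (frontier_subset_closure hfr)
    have h2 : d t ∉ D := by
      intro hmem
      rw [frontier, hDopen.interior_eq] at hfr
      exact hfr.2 hmem
    rw [hDmem] at h2
    push_neg at h2
    linarith
  have hmemD : ∀ s : ℂ, s.re < 0 → ∀ τ ∈ ball (0 : ℂ) 1, d τ + (s, 0) ∈ D := by
    intro s hs τ hτ
    rw [hDmem]
    have h := hud τ hτ
    simp only [Prod.fst_add, Prod.snd_add, Complex.add_re, add_zero]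
    linarith
  -- a point of `B` has norm at most 1
  have hBn : ∀ p ∈ B, ‖p‖ ≤ 1 := by
    intro p hp
    refine le_trans (norm_le_sqrt_e2 p) ?_
    rw [show (1 : ℝ) = Real.sqrt 1 by simp]
    exact Real.sqrt_le_sqrt (le_of_lt ((hBe2 p).1 hp))
  -- CORE collapse lemma
  have core : ∀ t ∈ ball (0 : ℂ) 1, ∀ t' ∈ ball (0 : ℂ) 1, ∀ (ζ : ℕ → ℂ) (ζl : ℂ),
      (∀ k, (ζ k).re < 0) → Filter.Tendsto ζ Filter.atTop (nhds ζl) → ζl.re = 0 →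
      Filter.Tendsto (fun k => F (d t' + (ζ k, 0)) - F (d t + (ζ k, 0)))
        Filter.atTop (nhds 0) := by
    intro t ht t' ht' ζ ζl hζ hζlim hζl
    set x : ℕ → ℂ × ℂ := fun k => F (d t + (ζ k, 0)) with hxdef
    set y : ℕ → ℂ × ℂ := fun k => F (d t' + (ζ k, 0)) with hydef
    have hxB : ∀ k, x k ∈ B := fun k => hFm (hmemD _ (hζ k) t ht)
    have hyB : ∀ k, y k ∈ B := fun k => hFm (hmemD _ (hζ k) t' ht')
    -- Step A : e2 (x k) → 1
    have hA : Filter.Tendsto (fun k => e2 (x k)) Filter.atTop (nhds 1) := by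
      by_contra hcon
      obtain ⟨U, hU, hfreq⟩ := Filter.not_tendsto_iff_exists_frequently_notMem.mp hcon
      obtain ⟨ε, hε, hball⟩ := Metric.mem_nhds_iff.mp hU
      have hfreq' : ∃ᶠ k in Filter.atTop, e2 (x k) ≤ 1 - ε := by
        refine hfreq.mono fun k hk => ?_
        by_contra hlt
        push_neg at hlt
        refine hk (hball ?_)
        rw [mem_ball, Real.dist_eq, abs_lt]
        have := (hBe2 _).1 (hxB k)
        constructor <;> linarith
      obtain ⟨κ, hκmono, hκ⟩ := Filter.extraction_of_frequently_atTop hfreq'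
      have hK : IsCompact {p : ℂ × ℂ | e2 p ≤ 1 - ε} := by
        refine IsCompact.of_isClosed_subset (isCompact_closedBall (0 : ℂ × ℂ) 1)
          (isClosed_le e2_continuous continuous_const) ?_
        intro p hp
        rw [Metric.mem_closedBall, dist_zero_right]
        refine le_trans (norm_le_sqrt_e2 p) ?_
        rw [show (1 : ℝ) = Real.sqrt 1 by simp]
        refine Real.sqrt_le_sqrt ?_
        have : e2 p ≤ 1 - ε := hp
        linarith
      obtain ⟨q, hqK, ψ, hψmono, hψtend⟩ := hK.tendsto_subseq (fun j => hκ j)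
      have hqB : q ∈ B := by
        rw [hBe2]
        have hq : e2 q ≤ 1 - ε := hqK
        linarith
      have hGq : Filter.Tendsto (fun j => G (x (κ (ψ j)))) Filter.atTop (nhds (G q)) :=
        ((hG.continuousOn.continuousAt (hBopen.mem_nhds hqB)).tendsto).comp hψtend
      have heq : ∀ j, G (x (κ (ψ j))) = d t + (ζ (κ (ψ j)), 0) := fun j =>
        hGF _ (hmemD _ (hζ _) t ht)
      have hζsub : Filter.Tendsto (fun j => ζ (κ (ψ j))) Filter.atTop (nhds ζl) :=
        hζlim.comp ((hκmono.comp hψmono).tendsto_atTop)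
      have hptend : Filter.Tendsto (fun j => d t + (ζ (κ (ψ j)), 0))
          Filter.atTop (nhds (d t + (ζl, 0))) := by
        have h1 : Filter.Tendsto (fun j => ((ζ (κ (ψ j)) : ℂ), (0 : ℂ)))
            Filter.atTop (nhds ((ζl, 0) : ℂ × ℂ)) :=
          hζsub.prodMk_nhds tendsto_const_nhds
        exact tendsto_const_nhds.add h1
      have hlim2 : Filter.Tendsto (fun j => G (x (κ (ψ j)))) Filter.atTop
          (nhds (d t + (ζl, 0))) := by
        have hfun : (fun j => G (x (κ (ψ j)))) = fun j => d t + (ζ (κ (ψ j)), 0) :=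
          funext heq
        rw [hfun]
        exact hptend
      have hqeq : G q = d t + (ζl, 0) := tendsto_nhds_unique hGq hlim2
      have hmem : G q ∈ D := hGm hqB
      rw [hqeq, hDmem] at hmem
      simp only [Prod.fst_add, Prod.snd_add, Complex.add_re, add_zero] at hmem
      have h := hud t ht
      linarith
    -- Step B : inner product estimate
    set τ' : ℂ := mob t t' with hτ'def
    have htab : ‖t‖ < 1 := by rwa [mem_ball_zero_iff] at ht
    have ht'ab : ‖t'‖ < 1 := by rwa [mem_ball_zero_iff] at ht'
    have hτ'lt : ‖τ'‖ < 1 := mob_lt htab ht'ab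
    have hmtab : ‖-t‖ < 1 := by rw [norm_neg]; exact htab
    set Cst : ℝ := ‖τ'‖ / (1 - ‖τ'‖) with hCdef
    have hbound : ∀ᶠ k in Filter.atTop,
        ‖dot (y k) (x k) - ((e2 (x k) : ℝ) : ℂ)‖ ≤ Cst * (1 - e2 (x k)) := by
      have hev : ∀ᶠ k in Filter.atTop, (1 : ℝ) / 2 < e2 (x k) :=
        hA.eventually (eventually_gt_nhds (by norm_num))
      filter_upwards [hev] with k hk
      have hxlt : e2 (x k) < 1 := (hBe2 _).1 (hxB k)
      set ρ : ℝ := Real.sqrt (e2 (x k)) with hρdef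
      have hρpos : 0 < ρ := Real.sqrt_pos.mpr (by linarith)
      have hρsq : ρ ^ 2 = e2 (x k) := Real.sq_sqrt (by linarith)
      have hρlt : ρ < 1 := by nlinarith
      set xh : ℂ × ℂ := ((ρ⁻¹ : ℝ) : ℂ) • x k with hxhdef
      have hxh1 : e2 xh = 1 := by
        rw [hxhdef, e2_csmul, Complex.norm_real, Real.norm_eq_abs, _root_.abs_of_pos (inv_pos.mpr hρpos),
          inv_pow, hρsq]
        field_simp
      set g : ℂ → ℂ := fun τ => dot (F (d (mob (-t) τ) + ((ζ k : ℂ), (0 : ℂ)))) xh with hgdef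
      have hmobmaps : Set.MapsTo (fun τ => d (mob (-t) τ) + ((ζ k : ℂ), (0 : ℂ)))
          (ball (0 : ℂ) 1) D := fun τ hτm => hmemD _ (hζ k) _ (mob_mapsTo hmtab hτm)
      have hFc : DifferentiableOn ℂ
          (fun τ => F (d (mob (-t) τ) + ((ζ k : ℂ), (0 : ℂ)))) (ball (0 : ℂ) 1) := by
        apply hF.comp _ hmobmaps
        apply DifferentiableOn.add
        · exact hd.comp (mob_diffOn hmtab) (mob_mapsTo hmtab)
        · exact differentiableOn_const _
      have hgd : DifferentiableOn ℂ g (ball (0 : ℂ) 1) := by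
        have : g = fun τ => (F (d (mob (-t) τ) + ((ζ k : ℂ), (0 : ℂ)))).1 * (starRingEnd ℂ) xh.1
            + (F (d (mob (-t) τ) + ((ζ k : ℂ), (0 : ℂ)))).2 * (starRingEnd ℂ) xh.2 := rfl
        rw [this]
        exact (hFc.fst.mul (differentiableOn_const _)).add
          (hFc.snd.mul (differentiableOn_const _))
      have hgm : Set.MapsTo g (ball (0 : ℂ) 1) (ball (0 : ℂ) 1) := by
        intro τ hτm
        rw [mem_ball_zero_iff]
        have hlt : e2 (F (d (mob (-t) τ) + ((ζ k : ℂ), (0 : ℂ)))) < 1 :=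
          (hBe2 _).1 (hFm (hmobmaps hτm))
        calc ‖g τ‖
            ≤ Real.sqrt (e2 (F (d (mob (-t) τ) + ((ζ k : ℂ), (0 : ℂ))))) * Real.sqrt (e2 xh) :=
              abs_dot_le _ _
          _ = Real.sqrt (e2 (F (d (mob (-t) τ) + ((ζ k : ℂ), (0 : ℂ))))) := by
              rw [hxh1, Real.sqrt_one, mul_one]
          _ < 1 := by
              rw [show (1 : ℝ) = Real.sqrt 1 by simp]
              exact Real.sqrt_lt_sqrt (e2_nonneg _) hlt
      have hg0 : g 0 = ((ρ : ℝ) : ℂ) := by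
        rw [hgdef]
        simp only [mob_zero]
        rw [hxhdef, dot_smul_right, Complex.conj_ofReal]
        show ((ρ⁻¹ : ℝ) : ℂ) * dot (x k) (x k) = ((ρ : ℝ) : ℂ)
        have hρC : ((ρ : ℝ) : ℂ) ≠ 0 := by
          simp only [ne_eq, Complex.ofReal_eq_zero]
          exact ne_of_gt hρpos
        rw [dot_self, ← hρsq]
        push_cast
        field_simp
      have hgτ' : g τ' = dot (y k) xh := by
        rw [hgdef]
        simp only [hτ'def, mob_neg_mob htab ht'ab]
        rfl
      have hτ'mem : τ' ∈ ball (0 : ℂ) 1 := by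
        rw [mem_ball_zero_iff]; exact hτ'lt
      have hkey := key_est hgd hgm hτ'mem
      rw [hg0, hgτ'] at hkey
      have hρC : ((ρ : ℝ) : ℂ) ≠ 0 := by
        simp only [ne_eq, Complex.ofReal_eq_zero]
        exact ne_of_gt hρpos
      have hxrec : ((ρ : ℝ) : ℂ) • xh = x k := by
        rw [hxhdef, smul_smul, show ((ρ : ℝ) : ℂ) * ((ρ⁻¹ : ℝ) : ℂ) = 1 by
          push_cast; exact mul_inv_cancel₀ hρC, one_smul]
      have hscal : dot (y k) (x k) - ((e2 (x k) : ℝ) : ℂ)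
          = ((ρ : ℝ) : ℂ) * (dot (y k) xh - ((ρ : ℝ) : ℂ)) := by
        rw [← hρsq, ← hxrec, dot_smul_right, Complex.conj_ofReal]
        push_cast
        ring
      rw [hscal, norm_mul, Complex.norm_real, Real.norm_eq_abs, _root_.abs_of_pos hρpos]
      have habsρ : ‖((ρ : ℝ) : ℂ)‖ = ρ := by
        rw [Complex.norm_real, Real.norm_eq_abs, _root_.abs_of_pos hρpos]
      rw [habsρ] at hkey
      calc ρ * ‖dot (y k) xh - ((ρ : ℝ) : ℂ)‖
          ≤ 1 * (‖τ'‖ * (1 - ρ ^ 2) / (1 - ‖τ'‖)) := by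
            apply mul_le_mul hρlt.le hkey (norm_nonneg _) (by norm_num)
        _ = Cst * (1 - e2 (x k)) := by
            rw [hCdef, hρsq]
            ring
    -- combine
    have hdiff0 : Filter.Tendsto (fun k => dot (y k) (x k) - ((e2 (x k) : ℝ) : ℂ))
        Filter.atTop (nhds 0) := by
      apply squeeze_zero_norm' (a := fun k => Cst * (1 - e2 (x k)))
      · filter_upwards [hbound] with k hk
        exact hk
      · have h1 : Filter.Tendsto (fun k => Cst * (1 - e2 (x k))) Filter.atTop
            (nhds (Cst * (1 - 1))) := tendsto_const_nhds.mul (tendsto_const_nhds.sub hA)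
        simpa using h1
    have hdot1 : Filter.Tendsto (fun k => dot (y k) (x k)) Filter.atTop (nhds 1) := by
      have h2 : Filter.Tendsto (fun k => ((e2 (x k) : ℝ) : ℂ)) Filter.atTop (nhds (1 : ℂ)) := by
        have h3 := (Complex.continuous_ofReal.tendsto 1).comp hA
        simpa [Function.comp_def] using h3
      have h4 := hdiff0.add h2
      simpa using h4
    have hre1 : Filter.Tendsto (fun k => (dot (y k) (x k)).re) Filter.atTop (nhds 1) := by
      have h5 := (Complex.continuous_re.tendsto 1).comp hdot1
      simpa [Function.comp_def] using h5
    have he2d : Filter.Tendsto (fun k => e2 (y k - x k)) Filter.atTop (nhds 0) := by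
      have hub : ∀ k, e2 (y k - x k) ≤ 2 - 2 * (dot (y k) (x k)).re := fun k => by
        have h1 : e2 (y k) < 1 := (hBe2 _).1 (hyB k)
        have h2 : e2 (x k) < 1 := (hBe2 _).1 (hxB k)
        rw [e2_sub]
        linarith
      have hlow : ∀ k, (0 : ℝ) ≤ e2 (y k - x k) := fun k => e2_nonneg _
      have hb : Filter.Tendsto (fun k => 2 - 2 * (dot (y k) (x k)).re) Filter.atTop (nhds 0) := by
        have h6 : Filter.Tendsto (fun k => 2 - 2 * (dot (y k) (x k)).re) Filter.atTop
            (nhds (2 - 2 * 1)) := tendsto_const_nhds.sub (hre1.const_mul 2)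
        simpa using h6
      exact tendsto_of_tendsto_of_tendsto_of_le_of_le tendsto_const_nhds hb hlow hub
    rw [show (0 : ℂ × ℂ) = 0 from rfl, tendsto_zero_iff_norm_tendsto_zero]
    apply squeeze_zero (fun k => norm_nonneg _) (fun k => norm_le_sqrt_e2 _)
    have h7 := (Real.continuous_sqrt.tendsto 0).comp he2d
    simpa [Function.comp_def] using h7

  -- main rigidity: d is constant
  have main : ∀ t ∈ ball (0 : ℂ) 1, ∀ t' ∈ ball (0 : ℂ) 1, d t = d t' := by
    intro t ht t' ht'
    set V : ℂ → ℂ × ℂ :=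
      fun ω => (1 + ω) • (F (d t' + (cay ω, 0)) - F (d t + (cay ω, 0))) with hVdef
    have hcaymem : ∀ ω ∈ ball (0 : ℂ) 1, ∀ s ∈ ball (0 : ℂ) 1, d s + (cay ω, 0) ∈ D := by
      intro ω hω s hs
      rw [mem_ball_zero_iff] at hω
      exact hmemD _ (cay_re_neg hω) s hs
    have hVd : DifferentiableOn ℂ V (ball (0 : ℂ) 1) := by
      apply DifferentiableOn.fun_smul
      · exact ((differentiable_const (1 : ℂ)).add differentiable_id).differentiableOn
      · have hcd : DifferentiableOn ℂ (fun ω : ℂ => ((cay ω : ℂ), (0 : ℂ)))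
            (ball (0 : ℂ) 1) := cay_diffOn.prodMk (differentiableOn_const _)
        apply DifferentiableOn.sub
        · exact hF.comp ((differentiableOn_const _).add hcd)
            (fun ω hω => hcaymem ω hω t' ht')
        · exact hF.comp ((differentiableOn_const _).add hcd)
            (fun ω hω => hcaymem ω hω t ht)
    have hdiffb : ∀ ω ∈ ball (0 : ℂ) 1,
        ‖F (d t' + (cay ω, 0)) - F (d t + (cay ω, 0))‖ ≤ 2 := by
      intro ω hω
      refine le_trans (norm_sub_le _ _) ?_
      have ha := hBn _ (hFm (hcaymem ω hω t' ht'))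
      have hb := hBn _ (hFm (hcaymem ω hω t ht))
      linarith
    have hVb : ∀ ω ∈ ball (0 : ℂ) 1, ‖V ω‖ ≤ 4 := by
      intro ω hω
      rw [hVdef]
      simp only
      rw [norm_smul]
      have h1 : ‖(1 : ℂ) + ω‖ ≤ 2 := by
        refine le_trans (norm_add_le _ _) ?_
        rw [mem_ball_zero_iff] at hω
        rw [norm_one]
        linarith
      have h2 := hdiffb ω hω
      have h3 := mul_le_mul h1 h2 (norm_nonneg _) (by norm_num)
      linarith
    set rr : ℕ → ℝ := fun n => 1 - ((n : ℝ) + 2)⁻¹ with hrrdef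
    have hrrpos : ∀ n, 0 < rr n := by
      intro n
      have h1 : (2 : ℝ) ≤ (n : ℝ) + 2 := by
        nlinarith [Nat.cast_nonneg (α := ℝ) n]
      have h2 : ((n : ℝ) + 2)⁻¹ ≤ 2⁻¹ := by
        apply inv_anti₀ (by norm_num) h1
      simp only [hrrdef]
      norm_num
      linarith
    have hrrlt : ∀ n, rr n < 1 := by
      intro n
      have h1 : (0 : ℝ) < (n : ℝ) + 2 := by positivity
      have h2 : (0 : ℝ) < ((n : ℝ) + 2)⁻¹ := by positivity
      simp only [hrrdef]
      linarith
    have hrrlim : Filter.Tendsto rr Filter.atTop (nhds 1) := by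
      have h1 : Filter.Tendsto (fun n : ℕ => ((n : ℝ) + 2)) Filter.atTop Filter.atTop :=
        Filter.tendsto_atTop_add_const_right _ 2 tendsto_natCast_atTop_atTop
      have h2 : Filter.Tendsto (fun n : ℕ => ((n : ℝ) + 2)⁻¹) Filter.atTop (nhds 0) :=
        tendsto_inv_atTop_zero.comp h1
      have h3 := (tendsto_const_nhds (x := (1 : ℝ)) (f := Filter.atTop (α := ℕ))).sub h2
      simpa using h3
    have hmemball : ∀ (n : ℕ) (α : ℝ), circleMap 0 (rr n) α ∈ ball (0 : ℂ) 1 := by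
      intro n α
      rw [mem_ball_zero_iff, norm_circleMap_zero,
        _root_.abs_of_pos (hrrpos n)]
      exact hrrlt n
    have hVrad : ∀ θ : ℝ, Filter.Tendsto (fun n => V (circleMap 0 (rr n) θ))
        Filter.atTop (nhds 0) := by
      intro θ
      have hωlim : Filter.Tendsto (fun n => circleMap 0 (rr n) θ) Filter.atTop
          (nhds (Complex.exp ((θ : ℂ) * Complex.I))) := by
        have h2 : Filter.Tendsto (fun n => ((rr n : ℝ) : ℂ)) Filter.atTop (nhds (1 : ℂ)) := by
          have h3 := (Complex.continuous_ofReal.tendsto 1).comp hrrlim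
          simpa [Function.comp_def] using h3
        have h3 := h2.mul_const (Complex.exp ((θ : ℂ) * Complex.I))
        rw [one_mul] at h3
        have h4 : (fun n => circleMap 0 (rr n) θ)
            = fun n => ((rr n : ℝ) : ℂ) * Complex.exp ((θ : ℂ) * Complex.I) :=
          funext fun n => circleMap_zero _ _
        rw [h4]
        exact h3
      by_cases hcase : Complex.exp ((θ : ℂ) * Complex.I) = -1
      · apply squeeze_zero_norm' (a := fun n => ‖(1 : ℂ) + circleMap 0 (rr n) θ‖ * 2)
        · apply Filter.Eventually.of_forall
          intro n
          rw [hVdef]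
          simp only
          rw [norm_smul]
          exact mul_le_mul_of_nonneg_left (hdiffb _ (hmemball n θ)) (norm_nonneg _)
        · have h6 := (tendsto_const_nhds (x := (1 : ℂ)) (f := Filter.atTop (α := ℕ))).add hωlim
          rw [hcase] at h6
          simp only [add_neg_cancel] at h6
          have h7 := (continuous_norm.tendsto (0 : ℂ)).comp h6
          have h8 := h7.mul_const (2 : ℝ)
          simpa using h8
      · have hden : Complex.exp ((θ : ℂ) * Complex.I) + 1 ≠ 0 := by
          intro h
          exact hcase (eq_neg_of_add_eq_zero_left h)
        have hccont : ContinuousAt cay (Complex.exp ((θ : ℂ) * Complex.I)) := by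
          have hcay : cay = fun ω : ℂ => (ω - 1) / (ω + 1) := rfl
          rw [hcay]
          exact (continuousAt_id.sub continuousAt_const).div
            (continuousAt_id.add continuousAt_const) hden
        set ζ : ℕ → ℂ := fun n => cay (circleMap 0 (rr n) θ) with hζdef
        have hζre : ∀ n, (ζ n).re < 0 := by
          intro n
          apply cay_re_neg
          have h5 := hmemball n θ
          rwa [mem_ball_zero_iff] at h5
        have hζlim2 : Filter.Tendsto ζ Filter.atTop
            (nhds (cay (Complex.exp ((θ : ℂ) * Complex.I)))) :=
          hccont.tendsto.comp hωlim
        have hζinfre : (cay (Complex.exp ((θ : ℂ) * Complex.I))).re = 0 := by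
          rw [cay_re _ hden]
          have h9 : Complex.normSq (Complex.exp ((θ : ℂ) * Complex.I)) = 1 := by
            rw [← Complex.sq_norm, Complex.norm_exp_ofReal_mul_I]
            norm_num
          rw [h9]
          simp
        have hcore := core t ht t' ht' ζ _ hζre hζlim2 hζinfre
        have h6 := (tendsto_const_nhds (x := (1 : ℂ)) (f := Filter.atTop (α := ℕ))).add hωlim
        have h10 := h6.smul hcore
        rw [smul_zero] at h10
        exact h10
    have hV0 : V 0 = 0 := by
      set c : ℂ := 2 * (Real.pi : ℂ) * Complex.I with hcdef
      have hkeyn : ∀ n : ℕ, c • V 0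
          = ∫ α in (0 : ℝ)..2 * Real.pi, Complex.I • V (circleMap 0 (rr n) α) := by
        intro n
        have hdc : DiffContOnCl ℂ V (ball 0 (rr n)) := by
          refine ⟨hVd.mono (ball_subset_ball (le_of_lt (hrrlt n))), ?_⟩
          apply hVd.continuousOn.mono
          rw [closure_ball (0 : ℂ) (ne_of_gt (hrrpos n))]
          exact closedBall_subset_ball (hrrlt n)
        have hcif := hdc.circleIntegral_sub_inv_smul (mem_ball_self (hrrpos n))
        rw [← hcif, circleIntegral]
        apply intervalIntegral.integral_congr
        intro α hα
        simp only [sub_zero, deriv_circleMap]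
        rw [smul_smul]
        congr 1
        have hne : circleMap 0 (rr n) α ≠ 0 := circleMap_ne_center (ne_of_gt (hrrpos n))
        field_simp
      have hlim : Filter.Tendsto
          (fun n => ∫ α in (0 : ℝ)..2 * Real.pi, Complex.I • V (circleMap 0 (rr n) α))
          Filter.atTop (nhds (∫ _ in (0 : ℝ)..2 * Real.pi, (0 : ℂ × ℂ))) := by
        apply intervalIntegral.tendsto_integral_filter_of_dominated_convergence
          (bound := fun _ => 4)
        · apply Filter.Eventually.of_forall
          intro n
          apply Continuous.aestronglyMeasurable
          exact (hVd.continuousOn.comp_continuous (continuous_circleMap 0 (rr n))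
            (fun α => hmemball n α)).const_smul Complex.I
        · apply Filter.Eventually.of_forall
          intro n
          apply MeasureTheory.ae_of_all
          intro α hα
          rw [norm_smul]
          have hnI : ‖Complex.I‖ = 1 := by
            rw [Complex.norm_I]
          rw [hnI, one_mul]
          exact hVb _ (hmemball n α)
        · exact intervalIntegrable_const
        · apply MeasureTheory.ae_of_all
          intro α hα
          have h11 := (hVrad α).const_smul Complex.I
          rw [smul_zero] at h11
          exact h11
      rw [intervalIntegral.integral_zero] at hlim
      have heqf : (fun _ : ℕ => c • V 0)
          = fun n => ∫ α in (0 : ℝ)..2 * Real.pi, Complex.I • V (circleMap 0 (rr n) α) :=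
        funext hkeyn
      have hconst : Filter.Tendsto (fun _ : ℕ => c • V 0) Filter.atTop (nhds (c • V 0)) :=
        tendsto_const_nhds
      rw [heqf] at hconst
      have hz : c • V 0 = 0 := tendsto_nhds_unique hconst hlim
      have hcne : c ≠ 0 := by
        rw [hcdef]
        refine mul_ne_zero (mul_ne_zero two_ne_zero ?_) Complex.I_ne_zero
        simp only [ne_eq, Complex.ofReal_eq_zero]
        exact Real.pi_ne_zero
      exact (smul_eq_zero.mp hz).resolve_left hcne
    have hfeq : F (d t' + ((-1 : ℂ), (0 : ℂ))) = F (d t + ((-1 : ℂ), (0 : ℂ))) := by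
      have h := hV0
      rw [hVdef] at h
      simp only [cay_zero, add_zero, one_smul] at h
      exact sub_eq_zero.mp h
    have hm1 : ((-1 : ℂ)).re < 0 := by norm_num
    have hp' : d t' + ((-1 : ℂ), (0 : ℂ)) ∈ D := hmemD _ hm1 t' ht'
    have hp : d t + ((-1 : ℂ), (0 : ℂ)) ∈ D := hmemD _ hm1 t ht
    have hpt : d t + ((-1 : ℂ), (0 : ℂ)) = d t' + ((-1 : ℂ), (0 : ℂ)) := by
      rw [← hGF _ hp, ← hGF _ hp', hfeq]
    exact add_right_cancel hpt
  exact hdnc ⟨d 0, fun t ht => main t ht 0 (mem_ball_self one_pos)⟩
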